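/- Let X ⊆ ℝⁿ be a nonempty closed convex set, f₁ : ℝⁿ → ℝ convex, and f₂ : ℝⁿ → ℝ convex and differentiable. Fix x ∈ ℝⁿ and define the proximal gradient ∇̃F(x,α) = (1/α)·( x − prox_{α f₁}(x − α∇f₂(x)) ) for α > 0. Then the function α ↦ α·‖∇̃F(x,α)‖ = ‖x − prox_{α f₁}(x − α∇f₂(x))‖ is monotonically nondecreasing on (0,∞): for 0 < α₁ ≤ α₂, α₁‖∇̃F(x,α₁)‖ ≤ α₂‖∇̃F(x,α₂)‖. -/

import Mathlib

open Set

/-- `p` is the proximal point `prox_φ(x, X)`: the minimizer over `y ∈ X` of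
`φ(y) + (1/2)‖y − x‖²`. -/
def IsProx {E : Type*} [NormedAddCommGroup E] [InnerProductSpace ℝ E]
    (φ : E → ℝ) (X : Set E) (x p : E) : Prop :=
  p ∈ X ∧ ∀ y ∈ X, φ p + (1 / 2) * ‖p - x‖ ^ 2 ≤ φ y + (1 / 2) * ‖y - x‖ ^ 2

lemma sq_norm_smul {n : ℕ} (c : ℝ) (v : EuclideanSpace ℝ (Fin n)) :
    ‖c • v‖ ^ 2 = c ^ 2 * ‖v‖ ^ 2 := by
  rw [norm_smul, mul_pow, Real.norm_eq_abs, sq_abs]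

lemma prox_expand {n : ℕ} (x p d : EuclideanSpace ℝ (Fin n)) (α : ℝ) :
    ‖p - (x - α • d)‖ ^ 2 = ‖p - x‖ ^ 2 + 2 * α * inner ℝ (p - x) d + α ^ 2 * ‖d‖ ^ 2 := by
  have h : p - (x - α • d) = (p - x) + α • d := by abel
  rw [h, @norm_add_sq_real, real_inner_smul_right, sq_norm_smul]
  ring

/-- The map `α ↦ α‖∇̃F(x,α)‖ = ‖x − prox_{αf₁}(x − α∇f₂(x))‖` is monotonically
nondecreasing in `α > 0`.  Here `p₁ = prox_{α₁f₁}(x − α₁∇f₂(x))` and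
`p₂ = prox_{α₂f₁}(x − α₂∇f₂(x))`. -/
theorem scaled_proximal_gradient_norm_monotone {n : ℕ}
    (X : Set (EuclideanSpace ℝ (Fin n)))
    (hXne : X.Nonempty) (hXcl : IsClosed X) (hXcv : Convex ℝ X)
    (f₁ f₂ : EuclideanSpace ℝ (Fin n) → ℝ)
    (hf₁ : ConvexOn ℝ univ f₁) (hf₂ : ConvexOn ℝ univ f₂)
    (g : EuclideanSpace ℝ (Fin n) → EuclideanSpace ℝ (Fin n))
    (hg : ∀ z, HasGradientAt f₂ (g z) z)
    (x : EuclideanSpace ℝ (Fin n))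
    (α₁ α₂ : ℝ) (hα₁ : 0 < α₁) (hα₁₂ : α₁ ≤ α₂)
    (p₁ p₂ : EuclideanSpace ℝ (Fin n))
    (hp₁ : IsProx (fun y => α₁ * f₁ y) X (x - α₁ • g x) p₁)
    (hp₂ : IsProx (fun y => α₂ * f₁ y) X (x - α₂ • g x) p₂) :
    ‖x - p₁‖ ≤ ‖x - p₂‖ := by
  set d := g x with hd
  have hn1 : ‖x - p₁‖ = ‖p₁ - x‖ := by rw [norm_sub_rev]
  have hn2 : ‖x - p₂‖ = ‖p₂ - x‖ := by rw [norm_sub_rev]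
  rw [hn1, hn2]
  rcases eq_or_lt_of_le hα₁₂ with heq | hlt
  · -- α₁ = α₂ : uniqueness of prox implies p₁ = p₂
    subst heq
    set m : EuclideanSpace ℝ (Fin n) := (1/2 : ℝ) • p₁ + (1/2 : ℝ) • p₂ with hm
    have hmX : m ∈ X := hXcv hp₁.1 hp₂.1 (by norm_num) (by norm_num) (by norm_num)
    have hf₁m : f₁ m ≤ (1/2) * f₁ p₁ + (1/2) * f₁ p₂ :=
      hf₁.2 (mem_univ p₁) (mem_univ p₂) (by norm_num) (by norm_num) (by norm_num)
    have h3 := hp₁.2 m hmX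
    have h4 := hp₂.2 m hmX
    dsimp only at h3 h4
    set a := p₁ - (x - α₁ • d) with ha
    set b := p₂ - (x - α₁ • d) with hb
    have hmz : ‖m - (x - α₁ • d)‖ ^ 2 =
        (1/2) * ‖a‖ ^ 2 + (1/2) * ‖b‖ ^ 2 - (1/4) * ‖p₁ - p₂‖ ^ 2 := by
      have hma : m - (x - α₁ • d) = (1/2 : ℝ) • a + (1/2 : ℝ) • b := by
        rw [hm, ha, hb, smul_sub, smul_sub]; module
      have hab : p₁ - p₂ = a - b := by rw [ha, hb]; abel
      have e1 := norm_add_sq_real ((1/2:ℝ) • a) ((1/2:ℝ) • b)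
      have e2 := norm_sub_sq_real a b
      rw [hma, hab, e1, e2, sq_norm_smul, sq_norm_smul,
        real_inner_smul_left, real_inner_smul_right]
      ring
    have hfm : α₁ * f₁ m ≤ α₁ * ((1/2) * f₁ p₁ + (1/2) * f₁ p₂) :=
      mul_le_mul_of_nonneg_left hf₁m (le_of_lt hα₁)
    have hpp : ‖p₁ - p₂‖ ^ 2 ≤ 0 := by
      rw [hmz] at h3 h4; linarith
    have hpe : p₁ = p₂ := by
      have h0 : ‖p₁ - p₂‖ = 0 := by nlinarith [norm_nonneg (p₁ - p₂)]
      exact sub_eq_zero.mp (norm_eq_zero.mp h0)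
    rw [hpe]
  · have h1 := hp₁.2 p₂ hp₂.1
    have h2 := hp₂.2 p₁ hp₁.1
    dsimp only at h1 h2
    rw [prox_expand, prox_expand] at h1
    rw [prox_expand, prox_expand] at h2
    have key : ‖p₁ - x‖ ^ 2 ≤ ‖p₂ - x‖ ^ 2 := by nlinarith
    nlinarith [norm_nonneg (p₁ - x), norm_nonneg (p₂ - x)]
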